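/- arXiv:0805.1583 — 6 statements merged into one kernel-verified Lean document; each statement's English description precedes it below -/
import Mathlib

section
/- For a group G and maximal linked systems A, B on G, the family A * B = {S ⊆ G : {x ∈ G : x⁻¹S ∈ B} ∈ A}, where x⁻¹S = {z ∈ G : x·z ∈ S}, is again a maximal linked system on G. -/
def Linked {X : Type*} (L : Set (Set X)) : Prop :=
  ∀ A ∈ L, ∀ B ∈ L, (A ∩ B).Nonempty

def MaxLinked {X : Type*} (L : Set (Set X)) : Prop :=
  Linked L ∧ ∀ L' : Set (Set X), Linked L' → L ⊆ L' → L' = L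

def perp {X : Type*} (L : Set (Set X)) : Set (Set X) :=
  {A | ∀ F ∈ L, (A ∩ F).Nonempty}

def conv {G : Type*} [Group G] (A B : Set (Set G)) : Set (Set G) :=
  {S | {x : G | {z : G | x * z ∈ S} ∈ B} ∈ A}

def Invariant {G : Type*} [Group G] (L : Set (Set G)) : Prop :=
  ∀ x : G, (fun A => (fun a => x * a) '' A) '' L = L

def MaxInvLinked {G : Type*} [Group G] (L : Set (Set G)) : Prop :=
  Linked L ∧ Invariant L ∧
    ∀ L' : Set (Set G), Linked L' → Invariant L' → L ⊆ L' → L' = L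

lemma maxLinked_mem_of_meets {X : Type*} {L : Set (Set X)} (hL : MaxLinked L)
    {S : Set X} (hne : S.Nonempty) (h : ∀ F ∈ L, (S ∩ F).Nonempty) : S ∈ L := by
  have hlink : Linked (insert S L) := by
    intro P hP Q hQ
    rcases hP with rfl | hP
    · rcases hQ with rfl | hQ
      · simpa using hne
      · exact h Q hQ
    · rcases hQ with rfl | hQ
      · obtain ⟨z, hz⟩ := h P hP
        exact ⟨z, hz.2, hz.1⟩
      · exact hL.1 P hP Q hQ
  have := hL.2 _ hlink (Set.subset_insert _ _)
  rw [← this]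
  exact Set.mem_insert _ _

lemma maxLinked_compl_mem {X : Type*} [Nonempty X] {L : Set (Set X)} (hL : MaxLinked L)
    {S : Set X} : Sᶜ ∈ L ↔ S ∉ L := by
  constructor
  · intro hc hS
    obtain ⟨z, hz⟩ := hL.1 S hS Sᶜ hc
    exact hz.2 hz.1
  · intro hS
    by_cases hem : S = ∅
    · subst hem
      rw [Set.compl_empty]
      exact maxLinked_mem_of_meets hL Set.univ_nonempty
        (fun F hF => by simpa using hL.1 F hF F hF)
    · -- S nonempty but S ∉ L, so some F ∈ L is disjoint from S
      by_contra hc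
      -- if S met every member of L, S would be in L
      have : ∃ F ∈ L, S ∩ F = ∅ := by
        by_contra hall
        push_neg at hall
        exact hS (maxLinked_mem_of_meets hL (Set.nonempty_iff_ne_empty.2 hem)
          (fun F hF => hall F hF))
      obtain ⟨F, hF, hdisj⟩ := this
      have hFsub : F ⊆ Sᶜ := by
        intro x hx hxS
        exact Set.eq_empty_iff_forall_notMem.1 hdisj x ⟨hxS, hx⟩
      have hFne : F.Nonempty := (hL.1 F hF F hF).mono (Set.inter_subset_left)
      exact hc (maxLinked_mem_of_meets hL (hFne.mono hFsub)
        (fun P hP => ((hL.1 F hF P hP).mono (Set.inter_subset_inter_left _ hFsub))))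

theorem conv_maxLinked {G : Type*} [Group G] {A B : Set (Set G)}
    (hA : MaxLinked A) (hB : MaxLinked B) : MaxLinked (conv A B) := by
  have hlink : Linked (conv A B) := by
    intro S hS T hT
    obtain ⟨x, hxS, hxT⟩ := hA.1 _ hS _ hT
    obtain ⟨z, hzS, hzT⟩ := hB.1 _ hxS _ hxT
    exact ⟨x * z, hzS, hzT⟩
  refine ⟨hlink, fun L' hL' hsub => Set.Subset.antisymm ?_ hsub⟩
  intro S hS
  by_contra hSc
  -- then Sᶜ ∈ conv A B
  have hcompl : Sᶜ ∈ conv A B := by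
    have h1 : {x : G | {z : G | x * z ∈ S} ∈ B} ∉ A := hSc
    have h2 : {x : G | {z : G | x * z ∈ S} ∈ B}ᶜ ∈ A := (maxLinked_compl_mem hA).2 h1
    have heq : {x : G | {z : G | x * z ∈ Sᶜ} ∈ B} = {x : G | {z : G | x * z ∈ S} ∈ B}ᶜ := by
      ext x
      have : {z : G | x * z ∈ Sᶜ} = {z : G | x * z ∈ S}ᶜ := rfl
      simp only [Set.mem_setOf_eq, Set.mem_compl_iff, this]
      exact maxLinked_compl_mem hB
    show {x : G | {z : G | x * z ∈ Sᶜ} ∈ B} ∈ A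
    rw [heq]; exact h2
  obtain ⟨z, hz⟩ := hL' S hS Sᶜ (hsub hcompl)
  exact hz.2 hz.1
end

section
/- A group G admits an invariant maximal linked system if and only if every element of G has odd order. -/
section Aux

variable {G : Type*} [Group G]

/-- Left translate of a set. -/
def tr (x : G) (A : Set G) : Set G := (fun a => x * a) '' A

lemma mem_tr {x y : G} {A : Set G} : y ∈ tr x A ↔ x⁻¹ * y ∈ A := by
  constructor
  · rintro ⟨a, ha, rfl⟩; simpa using ha
  · intro h; exact ⟨x⁻¹ * y, h, by simp⟩

lemma tr_tr (x y : G) (A : Set G) : tr x (tr y A) = tr (x * y) A := by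
  unfold tr
  rw [Set.image_image]
  exact Set.image_congr fun a _ => (mul_assoc x y a).symm

lemma tr_one (A : Set G) : tr (1 : G) A = A := by
  unfold tr; simp

lemma tr_inv_tr (x : G) (A : Set G) : tr x (tr x⁻¹ A) = A := by
  rw [tr_tr, mul_inv_cancel, tr_one]

lemma tr_compl (x : G) (A : Set G) : tr x Aᶜ = (tr x A)ᶜ :=
  Set.image_compl_eq (Group.mulLeft_bijective x)

lemma tr_mono {x : G} {A B : Set G} (h : A ⊆ B) : tr x A ⊆ tr x B :=
  Set.image_mono h

/-- The combinatorial heart: in a group all of whose elements have odd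
order, there is no set `A` with `A ∩ gA = ∅` and `Aᶜ ∩ hAᶜ = ∅`. -/
lemma key_lemma (hodd : ∀ x : G, Odd (orderOf x)) (A : Set G) (g h : G)
    (hg : ∀ x ∈ A, g * x ∉ A) (hh : ∀ x, x ∉ A → h * x ∈ A) : False := by
  -- s := h * g maps A into A
  have hs : ∀ x ∈ A, (h * g) * x ∈ A := by
    intro x hx
    have := hh _ (hg x hx)
    rwa [← mul_assoc] at this
  have hpow : ∀ n : ℕ, ∀ x ∈ A, (h * g) ^ n * x ∈ A := by
    intro n
    induction n with
    | zero => intro x hx; simpa using hx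
    | succ n ih =>
        intro x hx
        have h1 := hs _ (ih x hx)
        rw [← mul_assoc, ← pow_succ'] at h1
        exact h1
  have hsiff : ∀ x : G, x ∈ A ↔ (h * g) * x ∈ A := by
    intro x
    constructor
    · exact hs x
    · intro hx
      have hdpos : 0 < orderOf (h * g) := by
        rcases hodd (h * g) with ⟨m, hm⟩; omega
      have h1 := hpow (orderOf (h * g) - 1) _ hx
      rw [← mul_assoc, ← pow_succ, Nat.sub_add_cancel hdpos,
        pow_orderOf_eq_one, one_mul] at h1
      exact h1
  -- A is a twin set for g : x ∈ A ↔ g x ∉ A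
  have tw : ∀ x : G, x ∈ A ↔ g * x ∉ A := by
    intro x
    constructor
    · exact hg x
    · intro hx
      have := hh _ hx
      rw [← mul_assoc] at this
      exact (hsiff x).2 this
  -- hence g² stabilizes A
  have tw2 : ∀ x : G, x ∈ A ↔ g * (g * x) ∈ A := by
    intro x
    rw [tw x, tw (g * x)]
    exact not_not
  have tev : ∀ n : ℕ, ∀ x : G, x ∈ A ↔ (g * g) ^ n * x ∈ A := by
    intro n
    induction n with
    | zero => intro x; simp
    | succ n ih =>
        intro x
        have e : (g * g) ^ (n + 1) * x = g * (g * ((g * g) ^ n * x)) := by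
          rw [pow_succ', mul_assoc, mul_assoc]
        rw [e, ← tw2]
        exact ih x
  -- odd order of g : g = (g²)^(m+1) where orderOf g = 2m+1
  rcases hodd g with ⟨m, hm⟩
  have hgg : (g * g) ^ (m + 1) = g := by
    have h2 : (g * g) ^ (m + 1) = g ^ (2 * m + 1) * g := by
      rw [← sq, ← pow_mul]
      rw [show 2 * (m + 1) = (2 * m + 1) + 1 by ring, pow_succ]
    rw [h2, ← hm, pow_orderOf_eq_one, one_mul]
  have h1 : (1 : G) ∈ A ↔ g * 1 ∈ A := by
    rw [tev (m + 1) 1, hgg]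
  have h2 := tw 1
  tauto

end Aux

section MLSfacts

variable {G : Type*} [Group G] {L : Set (Set G)}

lemma maxlinked_univ [Nonempty G] (hL : MaxLinked L) : Set.univ ∈ L := by
  have h := hL.2 (L ∪ {Set.univ}) ?_ Set.subset_union_left
  · rw [← h]; exact Or.inr rfl
  · intro A hA B hB
    rcases hA with hA | hA <;> rcases hB with hB | hB
    · exact hL.1 A hA B hB
    · rcases hL.1 A hA A hA with ⟨x, hx, -⟩
      rw [Set.mem_singleton_iff.1 hB]
      exact ⟨x, hx, trivial⟩
    · rcases hL.1 B hB B hB with ⟨x, hx, -⟩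
      rw [Set.mem_singleton_iff.1 hA]
      exact ⟨x, trivial, hx⟩
    · rw [Set.mem_singleton_iff.1 hA, Set.mem_singleton_iff.1 hB]
      exact ⟨Classical.arbitrary G, trivial, trivial⟩

lemma maxlinked_perp [Nonempty G] (hL : MaxLinked L) {A : Set G}
    (hA : A ∈ perp L) : A ∈ L := by
  have hAne : A.Nonempty := by
    simpa using hA Set.univ (maxlinked_univ hL)
  have h := hL.2 (L ∪ {A}) ?_ Set.subset_union_left
  · rw [← h]; exact Or.inr rfl
  · intro B hB C hC
    rcases hB with hB | hB <;> rcases hC with hC | hC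
    · exact hL.1 B hB C hC
    · rw [Set.mem_singleton_iff.1 hC, Set.inter_comm]
      exact hA B hB
    · rw [Set.mem_singleton_iff.1 hB]
      exact hA C hC
    · rw [Set.mem_singleton_iff.1 hB, Set.mem_singleton_iff.1 hC,
        Set.inter_self]
      exact hAne

lemma maxlinked_up [Nonempty G] (hL : MaxLinked L) {A B : Set G}
    (hA : A ∈ L) (hAB : A ⊆ B) : B ∈ L := by
  apply maxlinked_perp hL
  intro F hF
  rcases hL.1 A hA F hF with ⟨x, hx1, hx2⟩
  exact ⟨x, hAB hx1, hx2⟩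

lemma maxlinked_compl [Nonempty G] (hL : MaxLinked L) {A : Set G}
    (hA : A ∉ L) : Aᶜ ∈ L := by
  by_cases hp : A ∈ perp L
  · exact absurd (maxlinked_perp hL hp) hA
  · simp only [perp, Set.mem_setOf_eq] at hp
    push_neg at hp
    rcases hp with ⟨F, hF, hFA⟩
    rw [← Set.not_nonempty_iff_eq_empty] at hFA
    rw [Set.not_nonempty_iff_eq_empty] at hFA
    apply maxlinked_up hL hF
    intro x hx hxA
    have : x ∈ A ∩ F := ⟨hxA, hx⟩
    rw [hFA] at this
    exact this

lemma invariant_mem_iff (hI : Invariant L) (x : G) (A : Set G) :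
    A ∈ L ↔ tr x A ∈ L := by
  constructor
  · intro hA
    have h : tr x A ∈ (fun A => (fun a => x * a) '' A) '' L := ⟨A, hA, rfl⟩
    rwa [hI x] at h
  · intro hA
    have h : tr x⁻¹ (tr x A) ∈ (fun A => (fun a => x⁻¹ * a) '' A) '' L :=
      ⟨tr x A, hA, rfl⟩
    rwa [hI x⁻¹, tr_tr, inv_mul_cancel, tr_one] at h

end MLSfacts

section Forward

variable {G : Type*} [Group G]

/-- If `g` has even (possibly zero) order, there is a twin set:
`tr g A = Aᶜ`. -/
lemma exists_twin {g : G} (he : Even (orderOf g)) :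
    ∃ A : Set G, tr g A = Aᶜ := by
  classical
  let s : Setoid G := ⟨fun x y => ∃ n : ℤ, g ^ n * y = x, by
    constructor
    · intro x; exact ⟨0, by simp⟩
    · rintro x y ⟨n, rfl⟩
      exact ⟨-n, by rw [← mul_assoc, zpow_neg, inv_mul_cancel, one_mul]⟩
    · rintro x y z ⟨n, rfl⟩ ⟨m, rfl⟩
      exact ⟨n + m, by rw [zpow_add, mul_assoc]⟩⟩
  let rep : G → G := fun x => (Quotient.mk s x).out
  have hrep : ∀ x : G, ∃ n : ℤ, g ^ n * rep x = x := by
    intro x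
    rcases Quotient.mk_out (s := s) x with ⟨n, hn⟩
    refine ⟨-n, ?_⟩
    have hx : rep x = g ^ n * x := hn.symm
    rw [hx, ← mul_assoc, zpow_neg, inv_mul_cancel, one_mul]
  have hrepg : ∀ x : G, rep (g * x) = rep x := by
    intro x
    have h : Quotient.mk s (g * x) = Quotient.mk s x :=
      Quotient.sound ⟨1, by rw [zpow_one]⟩
    simp only [rep, h]
  have parity : ∀ (c : G) (n m : ℤ), g ^ n * c = g ^ m * c →
      (Even n ↔ Even m) := by
    intro c n m hnm
    have h1 : g ^ n = g ^ m := mul_right_cancel hnm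
    have h2 : g ^ (n - m) = 1 := by
      rw [zpow_sub, h1, mul_inv_cancel]
    have h3 : ((orderOf g : ℤ)) ∣ n - m := orderOf_dvd_iff_zpow_eq_one.2 h2
    have h4 : (2 : ℤ) ∣ n - m := by
      rcases he with ⟨k, hk⟩
      refine dvd_trans ⟨k, ?_⟩ h3
      push_cast [hk]; ring
    have h5 : Even (n - m) := by
      rcases h4 with ⟨r, hr⟩
      exact ⟨r, by omega⟩
    exact Int.even_sub.1 h5
  refine ⟨{x | ∃ n : ℤ, Even n ∧ g ^ n * rep x = x}, ?_⟩
  ext y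
  rw [Set.mem_compl_iff, mem_tr]
  simp only [Set.mem_setOf_eq]
  have hry : rep (g⁻¹ * y) = rep y := by
    rw [← hrepg (g⁻¹ * y), mul_inv_cancel_left]
  rw [hry]
  have step : ∀ n : ℤ, g ^ n * rep y = g⁻¹ * y ↔ g ^ (1 + n) * rep y = y := by
    intro n
    rw [zpow_add, zpow_one, mul_assoc]
    constructor
    · intro hh; rw [hh, mul_inv_cancel_left]
    · intro hh
      have h2 := congrArg (fun z => g⁻¹ * z) hh
      simpa [inv_mul_cancel_left] using h2
  constructor
  · rintro ⟨n, hn, heq⟩ ⟨m, hm, heqm⟩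
    have heq' := (step n).1 heq
    have hpar := parity (rep y) (1 + n) m (by rw [heq', heqm])
    have hne : ¬ Even (1 + n) := by
      rcases hn with ⟨j, hj⟩
      rintro ⟨i, hi⟩
      omega
    exact hne (hpar.2 hm)
  · intro hnot
    rcases hrep y with ⟨k, hk⟩
    have hko : ¬ Even k := fun hke => hnot ⟨k, hke, hk⟩
    refine ⟨k - 1, ?_, (step (k - 1)).2 (by rw [show 1 + (k - 1) = k by ring, hk])⟩
    rcases Int.even_or_odd k with hke | ⟨j, hj⟩
    · exact absurd hke hko
    · exact ⟨j, by omega⟩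

end Forward

section Backward

variable {G : Type*} [Group G]

/-- Invariant, upward closed, proper families. -/
def Adm (L : Set (Set G)) : Prop :=
  (∀ A ∈ L, ∀ x : G, tr x A ∈ L) ∧
  (∀ A ∈ L, ∀ B : Set G, A ⊆ B → B ∈ L) ∧
  (∀ A ∈ L, Aᶜ ∉ L)

lemma ext_step {L : Set (Set G)} (hL : Adm L) {A : Set G}
    (hAc : Aᶜ ∉ L)
    (hlink : ∀ u : G, (A ∩ tr u A).Nonempty) :
    ∃ L', Adm L' ∧ L ⊆ L' ∧ A ∈ L' := by
  refine ⟨L ∪ {C | ∃ x : G, tr x A ⊆ C}, ⟨?_, ?_, ?_⟩, Set.subset_union_left, ?_⟩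
  · rintro C (hC | ⟨x, hx⟩) y
    · exact Or.inl (hL.1 C hC y)
    · refine Or.inr ⟨y * x, ?_⟩
      rw [← tr_tr]
      exact tr_mono hx
  · rintro C (hC | ⟨x, hx⟩) B hCB
    · exact Or.inl (hL.2.1 C hC B hCB)
    · exact Or.inr ⟨x, hx.trans hCB⟩
  · rintro C (hC | ⟨x, hx⟩) (hCc | ⟨y, hy⟩)
    · exact hL.2.2 C hC hCc
    · -- C ∈ L, tr y A ⊆ Cᶜ
      have h1 : C ⊆ tr y Aᶜ := by
        rw [tr_compl]
        intro z hz hz2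
        exact hy hz2 hz
      have h2 : tr y Aᶜ ∈ L := hL.2.1 C hC _ h1
      have h3 : Aᶜ ∈ L := by
        have := hL.1 _ h2 y⁻¹
        rwa [tr_tr, inv_mul_cancel, tr_one] at this
      exact hAc h3
    · -- Cᶜ ∈ L, tr x A ⊆ C
      have h1 : Cᶜ ⊆ tr x Aᶜ := by
        rw [tr_compl]
        exact Set.compl_subset_compl.2 hx
      have h2 : tr x Aᶜ ∈ L := hL.2.1 _ hCc _ h1
      have h3 : Aᶜ ∈ L := by
        have := hL.1 _ h2 x⁻¹
        rwa [tr_tr, inv_mul_cancel, tr_one] at this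
      exact hAc h3
    · -- tr x A ⊆ C, tr y A ⊆ Cᶜ
      rcases hlink (x⁻¹ * y) with ⟨z, hz1, hz2⟩
      rcases hz2 with ⟨a, ha, rfl⟩
      have e1 : x * (x⁻¹ * y * a) = y * a := by
        rw [← mul_assoc, mul_inv_cancel_left]
      have m1 : x * (x⁻¹ * y * a) ∈ C := hx ⟨_, hz1, rfl⟩
      have m2 : x * (x⁻¹ * y * a) ∈ Cᶜ := by
        rw [e1]
        exact hy ⟨a, ha, rfl⟩
      exact m2 m1
  · exact Or.inr ⟨1, by rw [tr_one]⟩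

lemma dichotomy (hodd : ∀ x : G, Odd (orderOf x)) {L : Set (Set G)}
    (hL : Adm L) (hm : ∀ L', Adm L' → L ⊆ L' → L' ⊆ L) (A : Set G) :
    A ∈ L ∨ Aᶜ ∈ L := by
  by_contra hc
  push_neg at hc
  obtain ⟨hA, hAc⟩ := hc
  have h1 : ¬ ∀ u : G, (A ∩ tr u A).Nonempty := by
    intro hlink
    obtain ⟨L', hL', hsub, hAmem⟩ := ext_step hL hAc hlink
    exact hA (hm L' hL' hsub hAmem)
  have h2 : ¬ ∀ u : G, (Aᶜ ∩ tr u Aᶜ).Nonempty := by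
    intro hlink
    have hAcc : Aᶜᶜ ∉ L := by rwa [compl_compl]
    obtain ⟨L', hL', hsub, hAmem⟩ := ext_step hL hAcc hlink
    exact hAc (hm L' hL' hsub hAmem)
  push_neg at h1 h2
  obtain ⟨u, hu⟩ := h1
  obtain ⟨v, hv⟩ := h2
  apply key_lemma hodd A u v
  · intro x hx hux
    have : u * x ∈ A ∩ tr u A := ⟨hux, ⟨x, hx, rfl⟩⟩
    rw [hu] at this
    exact this
  · intro x hx
    by_contra hvx
    have : v * x ∈ Aᶜ ∩ tr v Aᶜ := ⟨hvx, ⟨x, hx, rfl⟩⟩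
    rw [hv] at this
    exact this

end Backward

theorem invariant_maxLinked_iff_odd {G : Type*} [Group G] :
    (∃ L : Set (Set G), MaxLinked L ∧ Invariant L) ↔ ∀ g : G, Odd (orderOf g) := by
  constructor
  · rintro ⟨L, hML, hInv⟩ g
    by_contra hodd
    rw [← Nat.not_even_iff_odd, not_not] at hodd
    obtain ⟨A, htw⟩ := exists_twin hodd
    have hcase : A ∈ L ∨ Aᶜ ∈ L := by
      by_cases h : A ∈ L
      · exact Or.inl h
      · exact Or.inr (maxlinked_compl hML h)
    have hboth : A ∈ L ∧ Aᶜ ∈ L := by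
      rcases hcase with h | h
      · exact ⟨h, by rw [← htw]; exact (invariant_mem_iff hInv g A).1 h⟩
      · refine ⟨?_, h⟩
        have := (invariant_mem_iff hInv g Aᶜ).1 h
        rwa [tr_compl, htw, compl_compl] at this
    rcases hML.1 A hboth.1 Aᶜ hboth.2 with ⟨x, hx1, hx2⟩
    exact hx2 hx1
  · intro hodd
    -- Zorn's lemma on admissible families
    have hbase : Adm ({Set.univ} : Set (Set G)) := by
      refine ⟨?_, ?_, ?_⟩
      · intro A hA x
        rw [Set.mem_singleton_iff] at hA
        subst hA
        rw [Set.mem_singleton_iff]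
        exact Set.image_univ_of_surjective (Group.mulLeft_bijective x).surjective
      · intro A hA B hAB
        rw [Set.mem_singleton_iff] at hA
        subst hA
        rw [Set.mem_singleton_iff]
        exact Set.univ_subset_iff.1 hAB
      · intro A hA
        rw [Set.mem_singleton_iff] at hA
        subst hA
        rw [Set.mem_singleton_iff, Set.compl_univ]
        intro h
        exact Set.empty_ne_univ h
    have hchainub : ∀ c ⊆ {L : Set (Set G) | Adm L}, IsChain (· ⊆ ·) c → c.Nonempty →
        ∃ ub ∈ {L : Set (Set G) | Adm L}, ∀ s ∈ c, s ⊆ ub := by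
      intro c hc hchain _
      refine ⟨⋃₀ c, ⟨?_, ?_, ?_⟩, fun s hs => Set.subset_sUnion_of_mem hs⟩
      · rintro A ⟨M, hM, hAM⟩ x
        exact ⟨M, hM, (hc hM).1 A hAM x⟩
      · rintro A ⟨M, hM, hAM⟩ B hAB
        exact ⟨M, hM, (hc hM).2.1 A hAM B hAB⟩
      · rintro A ⟨M, hM, hAM⟩ ⟨N, hN, hAN⟩
        rcases hchain.total hM hN with h | h
        · exact (hc hN).2.2 A (h hAM) hAN
        · exact (hc hM).2.2 A hAM (h hAN)
    obtain ⟨L, -, hLmax⟩ := zorn_subset_nonempty {L : Set (Set G) | Adm L} hchainub _ hbase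
    have hLadm : Adm L := hLmax.1
    have hm : ∀ L', Adm L' → L ⊆ L' → L' ⊆ L := fun L' h1 h2 => hLmax.2 h1 h2
    have hdich := dichotomy hodd hLadm hm
    refine ⟨L, ⟨?_, ?_⟩, ?_⟩
    · -- Linked
      intro A hA B hB
      by_contra hne
      rw [Set.not_nonempty_iff_eq_empty] at hne
      have hBc : B ⊆ Aᶜ := by
        intro x hxB hxA
        have : x ∈ A ∩ B := ⟨hxA, hxB⟩
        rw [hne] at this
        exact this
      exact hLadm.2.2 A hA (hLadm.2.1 B hB Aᶜ hBc)
    · -- Maximal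
      intro L' hL' hsub
      apply Set.Subset.antisymm _ hsub
      intro C hC
      by_contra hCL
      rcases hdich C with h | h
      · exact hCL h
      · rcases hL' C hC Cᶜ (hsub h) with ⟨x, hx1, hx2⟩
        exact hx2 hx1
    · -- Invariant
      intro x
      apply Set.Subset.antisymm
      · rintro B ⟨A, hA, rfl⟩
        exact hLadm.1 A hA x
      · intro A hA
        refine ⟨tr x⁻¹ A, hLadm.1 A hA x⁻¹, ?_⟩
        show tr x (tr x⁻¹ A) = A
        exact tr_inv_tr x A
end

section
/- A maximal linked system Z on a group G is invariant (xZ = Z for all x ∈ G) if and only if Z is a right zero of the semigroup λ(G), i.e., A * Z = Z for every maximal linked system A on G. -/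
lemma maxlinked_univ_mem {X : Type*} [Nonempty X] {L : Set (Set X)}
    (h : MaxLinked L) : Set.univ ∈ L := by
  have hlink : Linked (insert Set.univ L) := by
    rintro A (rfl | hA) B (rfl | hB)
    · simp
    · simpa using (show (B ∩ B).Nonempty from h.1 B hB B hB)
    · simpa using (show (A ∩ A).Nonempty from h.1 A hA A hA)
    · exact h.1 A hA B hB
  have := h.2 _ hlink (Set.subset_insert _ _)
  rw [← this]; exact Set.mem_insert _ _

lemma maxlinked_empty_not_mem {X : Type*} {L : Set (Set X)}
    (h : MaxLinked L) : (∅ : Set X) ∉ L := by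
  intro hmem
  simpa using h.1 ∅ hmem ∅ hmem

lemma principal_maxlinked {X : Type*} (p : X) :
    MaxLinked {S : Set X | p ∈ S} := by
  constructor
  · intro A hA B hB; exact ⟨p, hA, hB⟩
  · intro L' hL' hsub
    ext S
    constructor
    · intro hS
      obtain ⟨y, hy1, hy2⟩ := hL' S hS {p} (hsub (by simp))
      simp only [Set.mem_singleton_iff] at hy2
      subst hy2
      exact hy1
    · exact fun hh => hsub hh

lemma image_mul_eq {G : Type*} [Group G] (x : G) (S : Set G) :
    (fun a => x * a) '' S = {z | x⁻¹ * z ∈ S} := by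
  ext z
  simp only [Set.mem_image, Set.mem_setOf_eq]
  constructor
  · rintro ⟨w, hw, rfl⟩; simpa using hw
  · intro hh; exact ⟨x⁻¹ * z, hh, by group⟩

lemma invariant_mem_iff_s9 {G : Type*} [Group G] {Z : Set (Set G)}
    (hInv : Invariant Z) (x : G) (S : Set G) :
    (fun a => x * a) '' S ∈ Z ↔ S ∈ Z := by
  constructor
  · intro hh
    rw [← hInv x] at hh
    obtain ⟨T, hT, hTS⟩ := hh
    have : T = S := Set.image_injective.mpr (mul_right_injective x) hTS
    rwa [← this]
  · intro hh
    rw [← hInv x]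
    exact ⟨S, hh, rfl⟩

theorem invariant_iff_rightZero {G : Type*} [Group G] {Z : Set (Set G)}
    (hZ : MaxLinked Z) :
    Invariant Z ↔ ∀ A : Set (Set G), MaxLinked A → conv A Z = Z := by
  constructor
  · intro hInv A hA
    ext S
    simp only [conv, Set.mem_setOf_eq]
    have key : ∀ x : G, ({z | x * z ∈ S} ∈ Z) ↔ S ∈ Z := by
      intro x
      have h1 : {z | x * z ∈ S} = (fun a => x⁻¹ * a) '' S := by
        rw [image_mul_eq]; simp
      rw [h1]
      exact invariant_mem_iff_s9 hInv x⁻¹ S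
    by_cases hS : S ∈ Z
    · have h2 : {x : G | {z | x * z ∈ S} ∈ Z} = Set.univ := by
        ext x; simp [key x, hS]
      rw [h2]
      simp [maxlinked_univ_mem hA, hS]
    · have h2 : {x : G | {z | x * z ∈ S} ∈ Z} = ∅ := by
        ext x; simp [key x, hS]
      rw [h2]
      simp [maxlinked_empty_not_mem hA, hS]
  · intro h x
    have hconv := h _ (principal_maxlinked (x⁻¹ : G))
    have key : ∀ S : Set G, ((fun a => x * a) '' S ∈ Z) ↔ S ∈ Z := by
      intro S
      have h0 := Set.ext_iff.mp hconv S
      simp only [conv, Set.mem_setOf_eq] at h0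
      rw [image_mul_eq]
      exact h0
    ext S
    constructor
    · rintro ⟨T, hT, rfl⟩
      exact (key T).mpr hT
    · intro hS
      refine ⟨(fun a => x⁻¹ * a) '' S, ?_, ?_⟩
      · have hcomp : (fun a => x * a) '' ((fun a => x⁻¹ * a) '' S) = S := by
          rw [Set.image_image]; simp
        have := (key ((fun a => x⁻¹ * a) '' S))
        rw [hcomp] at this
        exact this.mp hS
      · show (fun a => x * a) '' _ = S
        rw [Set.image_image]; simp
end

section
/- If L₀ is a maximal invariant linked system on a group G, then the set ↑L₀ = {L ∈ λ(G) : L ⊇ L₀} is a left ideal of the semigroup λ(G): for all maximal linked systems A, B with L₀ ⊆ B, L₀ ⊆ A * B. -/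
theorem up_maxInv_left_ideal {G : Type*} [Group G] {L₀ : Set (Set G)}
    (hL₀ : MaxInvLinked L₀) :
    ∀ A B : Set (Set G), MaxLinked A → MaxLinked B → L₀ ⊆ B → L₀ ⊆ conv A B := by
  intro A B hA hB hLB S hS
  -- The set {x | {z | x*z ∈ S} ∈ B} is all of G.
  have hall : {x : G | {z : G | x * z ∈ S} ∈ B} = Set.univ := by
    ext x
    simp only [Set.mem_setOf_eq, Set.mem_univ, iff_true]
    apply hLB
    have hinv := hL₀.2.1 x⁻¹
    have : (fun a => x⁻¹ * a) '' S ∈ L₀ := by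
      rw [← hinv]; exact ⟨S, hS, rfl⟩
    have heq : (fun a => x⁻¹ * a) '' S = {z : G | x * z ∈ S} := by
      ext z
      constructor
      · rintro ⟨s, hs, rfl⟩
        simpa using hs
      · intro hz
        exact ⟨x * z, hz, by group⟩
    rwa [heq] at this
  show {x : G | {z : G | x * z ∈ S} ∈ B} ∈ A
  rw [hall]
  -- univ ∈ A since A is maximal linked
  have hlink : Linked (A ∪ {Set.univ}) := by
    rintro P (hP | hP) Q (hQ | hQ)
    · exact hA.1 P hP Q hQ
    · rcases hA.1 P hP P hP with ⟨y, hy, _⟩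
      exact ⟨y, hy, by simp [Set.mem_singleton_iff.mp hQ]⟩
    · rcases hA.1 Q hQ Q hQ with ⟨y, hy, _⟩
      exact ⟨y, by simp [Set.mem_singleton_iff.mp hP], hy⟩
    · exact ⟨1, by simp [Set.mem_singleton_iff.mp hP, Set.mem_singleton_iff.mp hQ]⟩
  have := hA.2 (A ∪ {Set.univ}) hlink Set.subset_union_left
  rw [← this]
  exact Or.inr rfl
end

section
/- Let L₀ be a maximal invariant linked system on an abelian group G and A ∈ L₀⊥ \ L₀. Then there exists b ∈ G with A ∪ bA = G. -/
lemma smul_image_comp {G : Type*} [Group G] (x g : G) (X : Set G) :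
    (fun a => x * a) '' ((fun a => g * a) '' X) = (fun a => (x * g) * a) '' X := by
  rw [← Set.image_comp]
  ext y
  simp [Function.comp, mul_assoc]

lemma mem_of_inv {G : Type*} [Group G] {L₀ : Set (Set G)} (h : Invariant L₀)
    {F : Set G} (hF : F ∈ L₀) (g : G) : (fun a => g * a) '' F ∈ L₀ := by
  have := Set.mem_image_of_mem (fun A => (fun a => g * a) '' A) hF
  rwa [h g] at this

lemma key_mem {G : Type*} [Group G] {L₀ : Set (Set G)} (h : MaxInvLinked L₀)
    {X : Set G} (h1 : ∀ F ∈ L₀, (X ∩ F).Nonempty)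
    (h2 : ∀ c : G, (X ∩ (fun a => c * a) '' X).Nonempty) : X ∈ L₀ := by
  obtain ⟨hlink, hinv, hmax⟩ := h
  set R : Set (Set G) := Set.range (fun g => (fun a => g * a) '' X) with hR
  have hXR : X ∈ R := ⟨1, by simp⟩
  have horbF : ∀ g : G, ∀ F ∈ L₀, (((fun a => g * a) '' X) ∩ F).Nonempty := by
    intro g F hF
    obtain ⟨z, hzX, hzF⟩ := h1 ((fun a => g⁻¹ * a) '' F) (mem_of_inv hinv hF g⁻¹)
    obtain ⟨y, hyF, hy⟩ := hzF
    refine ⟨g * z, ⟨z, hzX, rfl⟩, ?_⟩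
    have : g * z = y := by rw [← hy]; group
    rw [this]; exact hyF
  have horborb : ∀ g h : G, (((fun a => g * a) '' X) ∩ ((fun a => h * a) '' X)).Nonempty := by
    intro g h
    obtain ⟨z, hzX, w, hwX, hw⟩ := h2 (g⁻¹ * h)
    refine ⟨g * z, ⟨z, hzX, rfl⟩, w, hwX, ?_⟩
    show h * w = g * z
    rw [← hw]; group
  have hlink' : Linked (L₀ ∪ R) := by
    rintro S (hS | ⟨g, rfl⟩) T (hT | ⟨h', rfl⟩)
    · exact hlink S hS T hT
    · obtain ⟨z, h1z, h2z⟩ := horbF h' S hS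
      exact ⟨z, h2z, h1z⟩
    · exact horbF g T hT
    · exact horborb g h'
  have hinv' : Invariant (L₀ ∪ R) := by
    intro x
    rw [Set.image_union, hinv x]
    congr 1
    ext S
    constructor
    · rintro ⟨T, ⟨g, rfl⟩, rfl⟩
      exact ⟨x * g, (smul_image_comp x g X).symm⟩
    · rintro ⟨g, rfl⟩
      refine ⟨(fun a => (x⁻¹ * g) * a) '' X, ⟨x⁻¹ * g, rfl⟩, ?_⟩
      show (fun a => x * a) '' _ = _
      rw [smul_image_comp, mul_inv_cancel_left]
  have heq := hmax (L₀ ∪ R) hlink' hinv' Set.subset_union_left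
  rw [← heq]
  exact Or.inr hXR

theorem perp_diff_cover_shift {G : Type*} [CommGroup G] {L₀ : Set (Set G)}
    (hL₀ : MaxInvLinked L₀) {A : Set G} (hA : A ∈ perp L₀ \ L₀) :
    ∃ b : G, A ∪ (fun g => b * g) '' A = Set.univ := by
  by_contra hcon
  push_neg at hcon
  set B := Aᶜ with hB
  have hBB : ∀ c : G, (B ∩ (fun a => c * a) '' B).Nonempty := by
    intro c
    obtain ⟨x, hx⟩ := Set.ne_univ_iff_exists_notMem _ |>.mp (hcon c)
    have hx1 : x ∉ A := fun h => hx (Or.inl h)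
    have hx2 : x ∉ (fun g => c * g) '' A := fun h => hx (Or.inr h)
    refine ⟨x, hx1, c⁻¹ * x, ?_, by group⟩
    intro hmem
    exact hx2 ⟨c⁻¹ * x, hmem, by group⟩
  by_cases hcase : ∀ F ∈ L₀, (B ∩ F).Nonempty
  · have hBmem : B ∈ L₀ := key_mem hL₀ hcase hBB
    obtain ⟨z, hzA, hzB⟩ := hA.1 B hBmem
    exact hzB hzA
  · push_neg at hcase
    obtain ⟨F, hF, hFB⟩ := hcase
    have hFA : F ⊆ A := by
      intro y hy
      by_contra hyA
      exact Set.eq_empty_iff_forall_notMem.mp hFB y ⟨hyA, hy⟩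
    have hAmem : A ∈ L₀ := by
      refine key_mem hL₀ hA.1 ?_
      intro c
      obtain ⟨z, hzF, hzcF⟩ := hL₀.1 F hF _ (mem_of_inv hL₀.2.1 hF c)
      obtain ⟨w, hwF, hw⟩ := hzcF
      exact ⟨z, hFA hzF, w, hFA hwF, hw⟩
    exact hA.2 hAmem
end

section
/- Let L₀ be a maximal invariant linked system on a group G. If A ∈ L₀⊥, then also G \ A ∈ L₀⊥ or A ∈ L₀. Equivalently, if A ∈ L₀⊥ \ L₀, then G \ A ∈ L₀⊥. -/
theorem compl_mem_perp {G : Type*} [Group G] {L₀ : Set (Set G)}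
    (hL₀ : MaxInvLinked L₀) {A : Set G} (hA : A ∈ perp L₀) (hA' : A ∉ L₀) :
    Aᶜ ∈ perp L₀ := by
  obtain ⟨hlink, hinv, hmax⟩ := hL₀
  intro F hF
  by_contra hne
  -- F ⊆ A
  have hFA : F ⊆ A := by
    intro a ha
    by_contra h
    exact hne ⟨a, h, ha⟩
  -- translates of members of L₀ are in L₀
  have htrans : ∀ (x : G) (S : Set G), S ∈ L₀ → (fun a => x * a) '' S ∈ L₀ := by
    intro x S hS
    have := hinv x
    rw [← this]
    exact ⟨S, hS, rfl⟩
  -- define the enlarged family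
  set L' : Set (Set G) := L₀ ∪ {S | ∃ x : G, S = (fun a => x * a) '' A} with hL'def
  have hsub : L₀ ⊆ L' := Set.subset_union_left
  -- a translate of A contains the corresponding translate of F
  have hsubA : ∀ x : G, (fun a => x * a) '' F ⊆ (fun a => x * a) '' A := by
    intro x
    exact Set.image_mono hFA
  have hlink' : Linked L' := by
    rintro S hS T hT
    rcases hS with hS | ⟨x, rfl⟩ <;> rcases hT with hT | ⟨y, rfl⟩
    · exact hlink S hS T hT
    · obtain ⟨a, ha1, ha2⟩ := hlink S hS _ (htrans y F hF)
      exact ⟨a, ha1, hsubA y ha2⟩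
    · obtain ⟨a, ha1, ha2⟩ := hlink _ (htrans x F hF) T hT
      exact ⟨a, hsubA x ha1, ha2⟩
    · obtain ⟨a, ha1, ha2⟩ := hlink _ (htrans x F hF) _ (htrans y F hF)
      exact ⟨a, hsubA x ha1, hsubA y ha2⟩
  have hinv' : Invariant L' := by
    intro g
    ext S
    constructor
    · rintro ⟨T, hT, rfl⟩
      rcases hT with hT | ⟨x, rfl⟩
      · exact Or.inl (htrans g T hT)
      · refine Or.inr ⟨g * x, ?_⟩
        simp only [Set.image_image, mul_assoc]
    · intro hS
      rcases hS with hS | ⟨x, rfl⟩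
      · have := htrans g⁻¹ S hS
        refine ⟨_, Or.inl this, ?_⟩
        simp only [Set.image_image, ← mul_assoc]
        simp only [mul_inv_cancel, one_mul, Set.image_id']
      · refine ⟨(fun a => (g⁻¹ * x) * a) '' A, Or.inr ⟨g⁻¹ * x, rfl⟩, ?_⟩
        simp only [Set.image_image, ← mul_assoc, mul_inv_cancel, one_mul]
  have heq := hmax L' hlink' hinv' hsub
  apply hA'
  rw [← heq]
  refine Or.inr ⟨1, ?_⟩
  simp
end
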